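/- In a finite-horizon Markov decision process obtained by backward induction, there exists for each state an action achieving the maximal one-step-lookahead value; consequently there exists a deterministic (pure) Markovian policy that is optimal: its value at every state equals the supremum over all (possibly randomized, history-dependent) policies of the expected reachability probability of the target set. -/
import Mathlib


open scoped BigOperators Classical

/-- A finite Markov decision process with a reachability target set. -/
structure FinMDP where
  S : Type
  [finS : Fintype S]
  A : S → Type
  [finA : ∀ s, Fintype (A s)]
  [neA : ∀ s, Nonempty (A s)]
  P : (s : S) → A s → S → ℝ
  T : Set S

attribute [instance] FinMDP.finS FinMDP.finA FinMDP.neA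

/-- Backward-induction values: `val n s` is the optimal probability of
visiting `T` within `n` steps starting from `s`. -/
noncomputable def FinMDP.val (M : FinMDP) : ℕ → M.S → ℝ
  | 0, s => if s ∈ M.T then 1 else 0
  | n + 1, s => if s ∈ M.T then 1 else
      ⨆ a : M.A s, ∑ r, M.P s a r * M.val n r

/-- Value of a deterministic (pure) Markovian policy. -/
noncomputable def FinMDP.pureVal (M : FinMDP) (pol : ℕ → (s : M.S) → M.A s) :
    ℕ → M.S → ℝ
  | 0, s => if s ∈ M.T then 1 else 0
  | n + 1, s => if s ∈ M.T then 1 else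
      ∑ r, M.P s (pol (n + 1) s) r * M.pureVal pol n r

/-- Value of a general randomized, history-dependent policy. -/
noncomputable def FinMDP.genVal (M : FinMDP)
    (σ : List M.S → (s : M.S) → M.A s → ℝ) : ℕ → M.S → List M.S → ℝ
  | 0, s, _ => if s ∈ M.T then 1 else 0
  | n + 1, s, h => if s ∈ M.T then 1 else
      ∑ a : M.A s, σ h s a * ∑ r, M.P s a r * M.genVal σ n r (h ++ [s])


lemma exists_eq_ciSup_fin {ι : Type*} [Fintype ι] [Nonempty ι] (f : ι → ℝ) :
    ∃ a, f a = ⨆ b, f b := by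
  obtain ⟨a, ha⟩ := Finite.exists_max f
  refine ⟨a, le_antisymm (le_ciSup (Finite.bddAbove_range f) a) (ciSup_le fun b => ha b)⟩

/-- in a finite-horizon MDP solved by backward induction, every
state admits an action achieving the maximal one-step-lookahead value, and
there is a deterministic Markovian policy that is optimal: its value equals
the backward-induction value at every state, which dominates the value of
every (randomized, history-dependent) policy. -/
theorem exists_optimal_pure_markovian_policy (M : FinMDP) (F : ℕ)
    (hPnn : ∀ (s : M.S) (a : M.A s) (r : M.S), 0 ≤ M.P s a r)
    (hPsum : ∀ (s : M.S) (a : M.A s), ∑ r, M.P s a r = 1) :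
    (∀ (n : ℕ) (s : M.S), ∃ a : M.A s,
        (∑ r, M.P s a r * M.val n r) =
          ⨆ b : M.A s, ∑ r, M.P s b r * M.val n r) ∧
    ∃ pol : ℕ → (s : M.S) → M.A s,
      (∀ n, n ≤ F → ∀ s, M.pureVal pol n s = M.val n s) ∧
      (∀ σ : List M.S → (s : M.S) → M.A s → ℝ,
        (∀ h s a, 0 ≤ σ h s a) → (∀ h s, ∑ a, σ h s a = 1) →
        ∀ n, n ≤ F → ∀ s h, M.genVal σ n s h ≤ M.val n s) := by
  have hach : ∀ (n : ℕ) (s : M.S), ∃ a : M.A s,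
      (∑ r, M.P s a r * M.val n r) = ⨆ b : M.A s, ∑ r, M.P s b r * M.val n r :=
    fun n s => exists_eq_ciSup_fin _
  refine ⟨hach, ?_⟩
  choose pick hpick using hach
  refine ⟨fun n s => match n with | 0 => Classical.arbitrary _ | n + 1 => pick n s, ?_, ?_⟩
  · intro n hn
    clear hn
    induction n with
    | zero => intro s; rfl
    | succ n ih =>
      intro s
      simp only [FinMDP.pureVal, FinMDP.val]
      split
      · rfl
      · rw [Finset.sum_congr rfl (fun r _ => by rw [ih r])]
        exact hpick n s
  · intro σ hσnn hσsum n hn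
    clear hn
    induction n with
    | zero => intro s h; simp [FinMDP.genVal, FinMDP.val]
    | succ n ih =>
      intro s h
      simp only [FinMDP.genVal, FinMDP.val]
      split
      · exact le_refl 1
      · calc ∑ a : M.A s, σ h s a * ∑ r, M.P s a r * M.genVal σ n r (h ++ [s])
            ≤ ∑ a : M.A s, σ h s a * (⨆ b : M.A s, ∑ r, M.P s b r * M.val n r) := by
              apply Finset.sum_le_sum
              intro a _
              apply mul_le_mul_of_nonneg_left _ (hσnn h s a)
              calc ∑ r, M.P s a r * M.genVal σ n r (h ++ [s])
                  ≤ ∑ r, M.P s a r * M.val n r :=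
                    Finset.sum_le_sum fun r _ =>
                      mul_le_mul_of_nonneg_left (ih r (h ++ [s])) (hPnn s a r)
                _ ≤ ⨆ b : M.A s, ∑ r, M.P s b r * M.val n r :=
                    le_ciSup (Finite.bddAbove_range fun b : M.A s => ∑ r, M.P s b r * M.val n r) a
          _ = ⨆ b : M.A s, ∑ r, M.P s b r * M.val n r := by
              rw [← Finset.sum_mul, hσsum h s, one_mul]
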